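/- (Multi-covariate extension of Proposition 1.) Let there be n units with treatment responses Z_i ∈ ℝ and design vectors x_i ∈ ℝ^p, and suppose there is a coordinate j_0 with x_{i j_0} = 1 for all i (an intercept column). Let θ̂ be a local maximum of the logistic log-likelihood ℓ(θ) = ∑_{i=1}^n [Z_i (θᵀx_i) − log(1 + exp(θᵀx_i))], and set ê_i = exp(θ̂ᵀx_i)/(1 + exp(θ̂ᵀx_i)). If ∑_i Z_i(1 − ê_i) ≠ 0 and ∑_i (1 − Z_i) ê_i ≠ 0, then for every coordinate j, the overlap weights exactly balance the j-th predictor column: [∑_i x_{ij} Z_i(1 − ê_i)] / [∑_i Z_i(1 − ê_i)] = [∑_i x_{ij} (1 − Z_i) ê_i] / [∑_i (1 − Z_i) ê_i]. -/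

import Mathlib

open Finset

/-- Multi-covariate extension of Proposition 1: if the design includes an
intercept column and `θ̂` is a local maximum of the logistic log-likelihood,
then the overlap weights built from the fitted propensities
`ê_i = exp(θ̂ᵀx_i)/(1 + exp(θ̂ᵀx_i))` exactly balance every predictor column
between the treatment and control groups. -/
theorem overlap_weights_exact_balance_all_predictors
    (n p : ℕ) (hn : 0 < n) (hp : 0 < p)
    (x : Fin n → Fin p → ℝ) (Z : Fin n → ℝ)
    (j₀ : Fin p) (hintercept : ∀ i, x i j₀ = 1)
    (ℓ : (Fin p → ℝ) → ℝ)
    (hℓ : ℓ = fun θ => ∑ i, (Z i * (∑ j, θ j * x i j)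
        - Real.log (1 + Real.exp (∑ j, θ j * x i j))))
    (θhat : Fin p → ℝ) (hmax : IsLocalMax ℓ θhat)
    (ehat : Fin n → ℝ)
    (hehat : ehat = fun i =>
        Real.exp (∑ j, θhat j * x i j) / (1 + Real.exp (∑ j, θhat j * x i j)))
    (hd1 : ∑ i, Z i * (1 - ehat i) ≠ 0)
    (hd0 : ∑ i, (1 - Z i) * ehat i ≠ 0) :
    ∀ j : Fin p,
      (∑ i, x i j * Z i * (1 - ehat i)) / (∑ i, Z i * (1 - ehat i)) =
        (∑ i, x i j * (1 - Z i) * ehat i) / (∑ i, (1 - Z i) * ehat i) := by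
  -- notation
  set s : Fin n → ℝ := fun i => ∑ j, θhat j * x i j with hs
  have hpos : ∀ a : ℝ, (0:ℝ) < 1 + Real.exp a := fun a => by positivity
  -- gradient is zero in every coordinate direction
  have grad : ∀ j' : Fin p, ∑ i, (Z i - ehat i) * x i j' = 0 := by
    intro j'
    set c : Fin n → ℝ := fun i => x i j' with hc
    set θ : ℝ → (Fin p → ℝ) := fun t j => θhat j + t * (if j = j' then 1 else 0) with hθ
    have hθ0 : θ 0 = θhat := by funext j; simp [hθ]
    have hcont : Filter.Tendsto θ (nhds 0) (nhds θhat) := by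
      have hco : Continuous θ := continuous_pi fun j =>
        (continuous_const.add (continuous_id.mul continuous_const) :
          Continuous fun t : ℝ => θhat j + t * (if j = j' then 1 else 0))
      rw [← hθ0]
      exact hco.tendsto 0
    have hfmax : IsLocalMax (fun t => ℓ (θ t)) 0 := by
      have hmax' := hmax
      have hcont' := hcont
      rw [← hθ0] at hmax' hcont'
      have := hmax'.comp_tendsto hcont'
      exact this
    have hsum : ∀ t i, (∑ j, θ t j * x i j) = s i + t * c i := by
      intro t i
      have h1 : ∀ j, θ t j * x i j
          = θhat j * x i j + (if j = j' then t * x i j else 0) := by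
        intro j
        by_cases h : j = j' <;> simp [hθ, h] <;> ring
      rw [Finset.sum_congr rfl (fun j _ => h1 j), Finset.sum_add_distrib,
        Finset.sum_ite_eq' Finset.univ j' (fun j => t * x i j)]
      simp [hs, hc]
    have hfe : (fun t => ℓ (θ t)) = fun t =>
        ∑ i, (Z i * (s i + t * c i) - Real.log (1 + Real.exp (s i + t * c i))) := by
      funext t
      rw [hℓ]
      exact Finset.sum_congr rfl (fun i _ => by rw [hsum t i])
    have hder : HasDerivAt (fun t =>
        ∑ i, (Z i * (s i + t * c i) - Real.log (1 + Real.exp (s i + t * c i))))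
        (∑ i, (Z i - ehat i) * c i) 0 := by
      apply HasDerivAt.fun_sum
      intro i _
      have h1 : HasDerivAt (fun t : ℝ => s i + t * c i) (c i) 0 := by
        simpa using ((hasDerivAt_id (0:ℝ)).mul_const (c i)).const_add (s i)
      have h2 : HasDerivAt (fun t : ℝ => Real.exp (s i + t * c i))
          (Real.exp (s i) * c i) 0 := by
        simpa using h1.exp
      have h3 : HasDerivAt (fun t : ℝ => 1 + Real.exp (s i + t * c i))
          (Real.exp (s i) * c i) 0 := h2.const_add 1
      have h4 : HasDerivAt (fun t : ℝ => Real.log (1 + Real.exp (s i + t * c i)))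
          ((Real.exp (s i) * c i) / (1 + Real.exp (s i))) 0 := by
        have := h3.log (by positivity : (1:ℝ) + Real.exp (s i + 0 * c i) ≠ 0)
        simpa using this
      have h5 : HasDerivAt (fun t : ℝ => Z i * (s i + t * c i)) (Z i * c i) 0 :=
        h1.const_mul (Z i)
      have h6 := h5.fun_sub h4
      convert h6 using 1
      rw [hehat]
      field_simp
      ring
    have := hfmax.hasDerivAt_eq_zero (hfe ▸ hder)
    simpa [hc] using this
  -- rewrite the two kinds of sums using the gradient conditions
  have key : ∀ j : Fin p,
      ∑ i, x i j * Z i * (1 - ehat i) = ∑ i, x i j * (1 - Z i) * ehat i := by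
    intro j
    have h := grad j
    have : ∑ i, (x i j * Z i * (1 - ehat i) - x i j * (1 - Z i) * ehat i) = 0 := by
      rw [← h]
      exact Finset.sum_congr rfl (fun i _ => by ring)
    rw [Finset.sum_sub_distrib] at this
    linarith
  have keyd : ∑ i, Z i * (1 - ehat i) = ∑ i, (1 - Z i) * ehat i := by
    have := key j₀
    simpa [hintercept] using this
  intro j
  rw [key j, keyd]
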